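/- arXiv:2411.05598 — 2 statements merged into one kernel-verified Lean document; each statement's English description precedes it below -/
import Mathlib

section
/- If a concrete shift (R, S, φ_R, φ_S, ψ_A, ψ_B) between essential ℕ-matrices A and B with lag m is compatible, i.e., φ_R^{(m)} = (id_R × ψ_B)(ψ_A^{-1} × id_R) and φ_S^{(m)} = (id_S × ψ_A)(ψ_B^{-1} × id_S), then it is aligned, i.e., (ψ_A × id_A)(id_R × φ_S)(φ_R × id_S) = (id_A × ψ_A) and (ψ_B × id_B)(id_S × φ_R)(φ_S × id_R) = (id_B × ψ_B). -/
/-! Edges of `ℕ`-matrices, fibered products of edge sets, paths, path isomorphisms,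
concrete shifts, iterated path isomorphisms `φ^{(m)}`, and the aligned / balanced /
compatible conditions, following Carlsen–Dor-On–Eilers. -/

/-- The edge set `E_F = {(v, α, w) : 0 ≤ α < F_{v w}}` of a matrix `F` over `ℕ`. -/
def Edge {α β : Type} (F : Matrix α β ℕ) : Type :=
  {x : α × ℕ × β // x.2.1 < F x.1 x.2.2}

/-- Source of an edge. -/
def Edge.src {α β : Type} {F : Matrix α β ℕ} (e : Edge F) : α := e.1.1

/-- Range (target) of an edge. -/
def Edge.tgt {α β : Type} {F : Matrix α β ℕ} (e : Edge F) : β := e.1.2.2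

/-- Fibered product of two edge-like sets: composable pairs. -/
def FP {γ : Type} (X Y : Type) (t : X → γ) (s : Y → γ) : Type :=
  {p : X × Y // t p.1 = s p.2}

/-- Paths of length `m` in the graph of a square matrix `X`: composable `m`-tuples of edges. -/
def EPath {α : Type} (X : Matrix α α ℕ) (m : ℕ) : Type :=
  {p : Fin m → Edge X //
    ∀ (i : ℕ) (h : i + 1 < m), (p ⟨i + 1, h⟩).src = (p ⟨i, Nat.lt_of_succ_lt h⟩).tgt}

/-- Source of a (nonempty) path. -/
def EPath.src {α : Type} {X : Matrix α α ℕ} {m : ℕ} (p : EPath X m) (h : 0 < m) : α :=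
  ((p.1 ⟨0, h⟩)).src

/-- Range of a (nonempty) path. -/
def EPath.tgt {α : Type} {X : Matrix α α ℕ} {m : ℕ} (p : EPath X m) (h : 0 < m) : α :=
  ((p.1 ⟨m - 1, Nat.sub_lt h Nat.one_pos⟩)).tgt

/-- A matrix is essential if it has no zero rows and no zero columns. -/
def MatEssential {V : Type} (A : Matrix V V ℕ) : Prop :=
  (∀ v, ∃ w, A v w ≠ 0) ∧ (∀ w, ∃ v, A v w ≠ 0)

/-- A concrete shift between `A` and `B` with lag `m`: matrices `R`, `S` over `ℕ` together
with path isomorphisms (source- and range-preserving bijections)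
`φR : E_A × E_R → E_R × E_B`, `φS : E_B × E_S → E_S × E_A`,
`ψA : E_R × E_S → E_A^m`, `ψB : E_S × E_R → E_B^m`. -/
structure ConcreteShift {V W : Type} (A : Matrix V V ℕ) (B : Matrix W W ℕ) (m : ℕ) where
  hm : 0 < m
  R : Matrix V W ℕ
  S : Matrix W V ℕ
  φR : FP (Edge A) (Edge R) Edge.tgt Edge.src ≃ FP (Edge R) (Edge B) Edge.tgt Edge.src
  φS : FP (Edge B) (Edge S) Edge.tgt Edge.src ≃ FP (Edge S) (Edge A) Edge.tgt Edge.src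
  ψA : FP (Edge R) (Edge S) Edge.tgt Edge.src ≃ EPath A m
  ψB : FP (Edge S) (Edge R) Edge.tgt Edge.src ≃ EPath B m
  φR_src : ∀ p, ((φR p).1.1).src = (p.1.1).src
  φR_tgt : ∀ p, ((φR p).1.2).tgt = (p.1.2).tgt
  φS_src : ∀ p, ((φS p).1.1).src = (p.1.1).src
  φS_tgt : ∀ p, ((φS p).1.2).tgt = (p.1.2).tgt
  ψA_src : ∀ p, (ψA p).src hm = (p.1.1).src
  ψA_tgt : ∀ p, (ψA p).tgt hm = (p.1.2).tgt
  ψB_src : ∀ p, (ψB p).src hm = (p.1.1).src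
  ψB_tgt : ∀ p, (ψB p).tgt hm = (p.1.2).tgt

/-- The defining relation of the iterated path isomorphism
`φ^{(m)} = (φ × id)(id × φ × id) ⋯ (id × φ) : E_X^m × E_M → E_M × E_Y^m`:
`IterRel φ m as r r' bs` holds iff `φ^{(m)}(as, r) = (r', bs)`, i.e. iff there is a chain
`ρ_m = r`, `ρ_0 = r'` with `φ(as_i, ρ_{i+1}) = (ρ_i, bs_i)` for all `i`. -/
def IterRel {α β : Type} {X : Matrix α α ℕ} {Y : Matrix β β ℕ} {M : Matrix α β ℕ}
    (φ : FP (Edge X) (Edge M) Edge.tgt Edge.src ≃ FP (Edge M) (Edge Y) Edge.tgt Edge.src)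
    (m : ℕ) (as : EPath X m) (r r' : Edge M) (bs : EPath Y m) : Prop :=
  ∃ ρ : Fin (m + 1) → Edge M, ρ (Fin.last m) = r ∧ ρ 0 = r' ∧
    ∀ i : Fin m, ∃ h : (as.1 i).tgt = (ρ i.succ).src,
      (φ ⟨(as.1 i, ρ i.succ), h⟩).1 = (ρ i.castSucc, bs.1 i)

variable {V W : Type} {A : Matrix V V ℕ} {B : Matrix W W ℕ} {m : ℕ}

/-- A concrete shift is aligned if
`(ψ_A × id_A)(id_R × φ_S)(φ_R × id_S) = (id_A × ψ_A)` and
`(ψ_B × id_B)(id_S × φ_R)(φ_S × id_R) = (id_B × ψ_B)`,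
under the canonical identifications `E_A^m × E_A ≅ E_A^{m+1} ≅ E_A × E_A^m`. -/
def ConcreteShift.Aligned (cs : ConcreteShift A B m) : Prop :=
  (∀ (a : Edge A) (r : Edge cs.R) (s : Edge cs.S)
      (h1 : a.tgt = r.src) (h2 : r.tgt = s.src)
      (r' : Edge cs.R) (b : Edge B) (_ : (cs.φR ⟨(a, r), h1⟩).1 = (r', b))
      (h3 : b.tgt = s.src)
      (s' : Edge cs.S) (a' : Edge A) (_ : (cs.φS ⟨(b, s), h3⟩).1 = (s', a'))
      (h4 : r'.tgt = s'.src),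
      (Fin.snoc (cs.ψA ⟨(r', s'), h4⟩).1 a' : Fin (m + 1) → Edge A) = (Fin.cons a (cs.ψA ⟨(r, s), h2⟩).1 : Fin (m + 1) → Edge A)) ∧
  (∀ (b : Edge B) (s : Edge cs.S) (r : Edge cs.R)
      (h1 : b.tgt = s.src) (h2 : s.tgt = r.src)
      (s' : Edge cs.S) (a' : Edge A) (_ : (cs.φS ⟨(b, s), h1⟩).1 = (s', a'))
      (h3 : a'.tgt = r.src)
      (r' : Edge cs.R) (b' : Edge B) (_ : (cs.φR ⟨(a', r), h3⟩).1 = (r', b'))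
      (h4 : s'.tgt = r'.src),
      (Fin.snoc (cs.ψB ⟨(s', r'), h4⟩).1 b' : Fin (m + 1) → Edge B) = (Fin.cons b (cs.ψB ⟨(s, r), h2⟩).1 : Fin (m + 1) → Edge B))

/-- A concrete shift is balanced if
`ψ_A⁻¹ × ψ_A = (id_R × φ_S^{(m)})(φ_R^{(m)} × id_S)` and
`ψ_B⁻¹ × ψ_B = (id_S × φ_R^{(m)})(φ_S^{(m)} × id_R)`. -/
def ConcreteShift.Balanced (cs : ConcreteShift A B m) : Prop :=
  (∀ (as : EPath A m) (r : Edge cs.R) (s : Edge cs.S)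
      (_ : as.tgt cs.hm = r.src) (h2 : r.tgt = s.src)
      (r₀ : Edge cs.R) (bs : EPath B m) (_ : IterRel cs.φR m as r r₀ bs)
      (s₀ : Edge cs.S) (as' : EPath A m) (_ : IterRel cs.φS m bs s s₀ as')
      (k : r₀.tgt = s₀.src),
      cs.ψA ⟨(r₀, s₀), k⟩ = as ∧ cs.ψA ⟨(r, s), h2⟩ = as') ∧
  (∀ (bs : EPath B m) (s : Edge cs.S) (r : Edge cs.R)
      (_ : bs.tgt cs.hm = s.src) (h2 : s.tgt = r.src)
      (s₀ : Edge cs.S) (as : EPath A m) (_ : IterRel cs.φS m bs s s₀ as)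
      (r₀ : Edge cs.R) (bs' : EPath B m) (_ : IterRel cs.φR m as r r₀ bs')
      (k : s₀.tgt = r₀.src),
      cs.ψB ⟨(s₀, r₀), k⟩ = bs ∧ cs.ψB ⟨(s, r), h2⟩ = bs')

/-- A concrete shift is compatible if
`φ_R^{(m)} = (id_R × ψ_B)(ψ_A⁻¹ × id_R)` and `φ_S^{(m)} = (id_S × ψ_A)(ψ_B⁻¹ × id_S)`. -/
def ConcreteShift.Compatible (cs : ConcreteShift A B m) : Prop :=
  (∀ (as : EPath A m) (r r' : Edge cs.R) (bs : EPath B m)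
      (_ : IterRel cs.φR m as r r' bs)
      (r₁ : Edge cs.R) (s₁ : Edge cs.S) (k : r₁.tgt = s₁.src)
      (_ : cs.ψA ⟨(r₁, s₁), k⟩ = as) (k2 : s₁.tgt = r.src),
      r' = r₁ ∧ bs = cs.ψB ⟨(s₁, r), k2⟩) ∧
  (∀ (bs : EPath B m) (s s' : Edge cs.S) (as : EPath A m)
      (_ : IterRel cs.φS m bs s s' as)
      (s₁ : Edge cs.S) (r₁ : Edge cs.R) (k : s₁.tgt = r₁.src)
      (_ : cs.ψB ⟨(s₁, r₁), k⟩ = bs) (k2 : r₁.tgt = s.src),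
      s' = s₁ ∧ as = cs.ψA ⟨(r₁, s), k2⟩)

section Helpers
universe u

def nsnoc {n : ℕ} {T : Sort u} (f : Fin n → T) (x : T) : Fin (n + 1) → T :=
  Fin.snoc f x

lemma nsnoc_castSucc {n : ℕ} {T : Sort u} (f : Fin n → T) (x : T) (i : Fin n) :
    nsnoc f x i.castSucc = f i := Fin.snoc_castSucc ..

lemma nsnoc_last {n : ℕ} {T : Sort u} (f : Fin n → T) (x : T) :
    nsnoc f x (Fin.last n) = x := Fin.snoc_last ..

lemma snoc_mk_lt {n : ℕ} {T : Sort u} (f : Fin n → T) (x : T) {i : ℕ} (h : i < n)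
    (h' : i < n + 1) : nsnoc f x ⟨i, h'⟩ = f ⟨i, h⟩ := by
  have : (⟨i, h'⟩ : Fin (n+1)) = Fin.castSucc ⟨i, h⟩ := rfl
  rw [this, nsnoc_castSucc]

lemma snoc_mk_eq {n : ℕ} {T : Sort u} (f : Fin n → T) (x : T) (h' : n < n + 1) :
    nsnoc f x ⟨n, h'⟩ = x := by
  have : (⟨n, h'⟩ : Fin (n+1)) = Fin.last n := rfl
  rw [this, nsnoc_last]

variable {α β : Type} {X : Matrix α α ℕ} {Y : Matrix β β ℕ} {M : Matrix α β ℕ}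

lemma exists_edge_src (hX : MatEssential X) (v : α) : ∃ e : Edge X, e.src = v := by
  obtain ⟨w, hw⟩ := hX.1 v
  exact ⟨⟨(v, 0, w), Nat.pos_of_ne_zero hw⟩, rfl⟩

lemma exists_edge_tgt (hX : MatEssential X) (v : α) : ∃ e : Edge X, e.tgt = v := by
  obtain ⟨w, hw⟩ := hX.2 v
  exact ⟨⟨(w, 0, v), Nat.pos_of_ne_zero hw⟩, rfl⟩

lemma exists_path_from (hX : MatEssential X) (v : α) (m : ℕ) (hm : 0 < m) :
    ∃ p : EPath X m, (p.1 ⟨0, hm⟩).src = v := by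
  choose f hf using exists_edge_src hX
  let g : ℕ → Edge X := fun k => Nat.rec (f v) (fun _ e => f e.tgt) k
  refine ⟨⟨fun i => g i.1, fun i h => hf _⟩, hf v⟩

lemma exists_path_ending (hX : MatEssential X) (a : Edge X) (m : ℕ) (hm : 0 < m) :
    ∃ p : EPath X m, p.1 ⟨m - 1, Nat.sub_lt hm Nat.one_pos⟩ = a := by
  choose f hf using exists_edge_tgt hX
  let g : ℕ → Edge X := fun k => Nat.rec a (fun _ e => f e.src) k
  refine ⟨⟨fun i => g (m - 1 - i.1), fun i h => ?_⟩, ?_⟩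
  · show (g (m - 1 - (i+1))).src = (g (m - 1 - i)).tgt
    have e : m - 1 - i = (m - 1 - (i+1)) + 1 := by omega
    rw [e]
    exact (hf _).symm
  · show g (m - 1 - (m-1)) = a
    have e : m - 1 - (m-1) = 0 := by omega
    rw [e]
    rfl

lemma exists_chain
    (φ : FP (Edge X) (Edge M) Edge.tgt Edge.src ≃ FP (Edge M) (Edge Y) Edge.tgt Edge.src)
    (hs : ∀ p, ((φ p).1.1).src = (p.1.1).src)
    (ht : ∀ p, ((φ p).1.2).tgt = (p.1.2).tgt) :
    ∀ (n : ℕ) (as : EPath X n) (r : Edge M),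
      (∀ h : 0 < n, (as.1 ⟨n - 1, Nat.sub_lt h Nat.one_pos⟩).tgt = r.src) →
      ∃ (ρ : Fin (n + 1) → Edge M) (bs : EPath Y n), ρ (Fin.last n) = r ∧
        ∀ i : Fin n, ∃ h : (as.1 i).tgt = (ρ i.succ).src,
          (φ ⟨(as.1 i, ρ i.succ), h⟩).1 = (ρ i.castSucc, bs.1 i) := by
  intro n
  induction n with
  | zero =>
    intro as r _
    exact ⟨fun _ => r, ⟨fun i => i.elim0, fun i h => absurd h (by omega)⟩, rfl, fun i => i.elim0⟩
  | succ n ih =>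
    intro as r hc
    have hc' : (as.1 (Fin.last n)).tgt = r.src := hc n.succ_pos
    set x : FP (Edge X) (Edge M) Edge.tgt Edge.src := ⟨(as.1 (Fin.last n), r), hc'⟩ with hxdef
    set q := φ x with hqdef
    let asI : EPath X n := ⟨fun i => as.1 i.castSucc, fun i h => as.2 i (by omega)⟩
    have hcompI : ∀ h : 0 < n, (asI.1 ⟨n - 1, Nat.sub_lt h Nat.one_pos⟩).tgt = q.1.1.src := by
      intro h
      have h1 : q.1.1.src = (as.1 (Fin.last n)).src := hs x
      have h2 : n - 1 + 1 < n + 1 := by omega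
      have h3 : (Fin.last n : Fin (n+1)) = ⟨n - 1 + 1, h2⟩ := Fin.ext (by simp; omega)
      have h4 := as.2 (n-1) h2
      rw [h1, h3, h4]
      rfl
    obtain ⟨ρ', bs', hlast', hstep'⟩ := ih asI q.1.1 hcompI
    refine ⟨nsnoc ρ' r, ⟨nsnoc bs'.1 q.1.2, ?_⟩, nsnoc_last _ _, ?_⟩
    · intro i h
      rcases Nat.lt_or_ge (i+1) n with h' | h'
      · rw [snoc_mk_lt _ _ h', snoc_mk_lt _ _ (by omega : i < n)]
        exact bs'.2 i h'
      · have hin : n = i + 1 := by omega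
        subst hin
        rw [snoc_mk_eq, snoc_mk_lt _ _ (by omega : i < i + 1)]
        obtain ⟨hh, hh2⟩ := hstep' (Fin.last i)
        have this2 := ht ⟨(asI.1 (Fin.last i), ρ' (Fin.last i).succ), hh⟩
        rw [hh2] at this2
        have this3 : (bs'.1 (Fin.last i)).tgt = (ρ' (Fin.last i).succ).tgt := this2
        have e4 : ρ' (Fin.last i).succ = q.1.1 := by rw [Fin.succ_last]; exact hlast'
        have this4 : (bs'.1 (Fin.last i)).tgt = q.1.1.tgt := by rw [← e4]; exact this3
        have e : (⟨i, by omega⟩ : Fin (i+1)) = Fin.last i := rfl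
        rw [e]
        exact q.2.symm.trans this4.symm
    · intro i
      rcases Nat.lt_or_ge i.1 n with hlt | hge
      · set j : Fin n := ⟨i.1, hlt⟩ with hjdef
        obtain ⟨hh, hh2⟩ := hstep' j
        have ea : asI.1 j = as.1 i := congrArg as.1 (Fin.ext rfl)
        have eb : nsnoc ρ' r i.succ = ρ' j.succ := by
          rw [show i.succ = Fin.castSucc j.succ from Fin.ext rfl, nsnoc_castSucc]
        have ec : nsnoc ρ' r i.castSucc = ρ' j.castSucc := by
          rw [show i.castSucc = Fin.castSucc j.castSucc from Fin.ext rfl, nsnoc_castSucc]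
        have ed : nsnoc bs'.1 q.1.2 i = bs'.1 j := by
          rw [show i = Fin.castSucc j from Fin.ext rfl, nsnoc_castSucc]
        have h0 : (as.1 i).tgt = (nsnoc ρ' r i.succ).src := by
          rw [eb, ← ea]; exact hh
        refine ⟨h0, ?_⟩
        have hfp : (⟨(as.1 i, nsnoc ρ' r i.succ), h0⟩ :
            FP (Edge X) (Edge M) Edge.tgt Edge.src) = ⟨(asI.1 j, ρ' j.succ), hh⟩ :=
          Subtype.ext (show (as.1 i, nsnoc ρ' r i.succ) = (asI.1 j, ρ' j.succ) by
            rw [eb, ← ea])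
        rw [hfp, hh2]
        exact Prod.ext ec.symm ed.symm
      · have hin : i = Fin.last n := Fin.ext (by simp; omega)
        subst hin
        have esucc : nsnoc ρ' r (Fin.last n).succ = r := by
          rw [Fin.succ_last]; exact nsnoc_last _ _
        have h0 : (as.1 (Fin.last n)).tgt = (nsnoc ρ' r (Fin.last n).succ).src := by
          rw [esucc]; exact hc'
        refine ⟨h0, ?_⟩
        have hfp : (⟨(as.1 (Fin.last n), nsnoc ρ' r (Fin.last n).succ), h0⟩ :
            FP (Edge X) (Edge M) Edge.tgt Edge.src) = x :=
          Subtype.ext (show (as.1 (Fin.last n), nsnoc ρ' r (Fin.last n).succ) =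
            (as.1 (Fin.last n), r) by rw [esucc])
        rw [hfp]
        have e1 : nsnoc ρ' r (Fin.last n).castSucc = q.1.1 := by
          rw [nsnoc_castSucc]; exact hlast'
        have e2 : nsnoc bs'.1 q.1.2 (Fin.last n) = q.1.2 := nsnoc_last _ _
        exact Prod.ext e1.symm e2.symm
def EPath.tail' {n : ℕ} (p : EPath X (n+1)) : EPath X n :=
  ⟨fun i => p.1 i.succ, fun i h => p.2 (i+1) (by omega)⟩

def EPath.init' {n : ℕ} (p : EPath X (n+1)) : EPath X n :=
  ⟨fun i => p.1 i.castSucc, fun i h => p.2 i (by omega)⟩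

def EPath.econs {n : ℕ} (a : Edge X) (p : EPath X n)
    (h : ∀ hn : 0 < n, a.tgt = (p.1 ⟨0, hn⟩).src) : EPath X (n+1) :=
  ⟨Fin.cons a p.1, by
    intro i hi
    match i, hi with
    | 0, hi =>
      show ((Fin.cons a p.1 : Fin (n+1) → Edge X) (Fin.succ ⟨0, by omega⟩)).src =
        ((Fin.cons a p.1 : Fin (n+1) → Edge X) 0).tgt
      rw [Fin.cons_succ, Fin.cons_zero]
      exact (h (by omega)).symm
    | Nat.succ i, hi =>
      show ((Fin.cons a p.1 : Fin (n+1) → Edge X) (Fin.succ ⟨i+1, by omega⟩)).src =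
        ((Fin.cons a p.1 : Fin (n+1) → Edge X) (Fin.succ ⟨i, by omega⟩)).tgt
      rw [Fin.cons_succ, Fin.cons_succ]
      exact p.2 i (by omega)⟩

lemma iter_tail
    (φ : FP (Edge X) (Edge M) Edge.tgt Edge.src ≃ FP (Edge M) (Edge Y) Edge.tgt Edge.src)
    {n : ℕ} (as : EPath X (n+1)) (r : Edge M) (ρ : Fin (n+2) → Edge M) (bs : EPath Y (n+1))
    (hlast : ρ (Fin.last (n+1)) = r)
    (hstep : ∀ i : Fin (n+1), ∃ h : (as.1 i).tgt = (ρ i.succ).src,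
      (φ ⟨(as.1 i, ρ i.succ), h⟩).1 = (ρ i.castSucc, bs.1 i)) :
    IterRel φ n (EPath.tail' as) r (ρ ((0 : Fin (n+1)).succ)) (EPath.tail' bs) := by
  refine ⟨fun i => ρ i.succ, ?_, rfl, fun i => ?_⟩
  · show ρ (Fin.last n).succ = r
    rw [Fin.succ_last]; exact hlast
  · obtain ⟨h, he⟩ := hstep i.succ
    exact ⟨h, he⟩

lemma iter_init
    (φ : FP (Edge X) (Edge M) Edge.tgt Edge.src ≃ FP (Edge M) (Edge Y) Edge.tgt Edge.src)
    {n : ℕ} (as : EPath X (n+1)) (ρ : Fin (n+2) → Edge M) (bs : EPath Y (n+1))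
    (hstep : ∀ i : Fin (n+1), ∃ h : (as.1 i).tgt = (ρ i.succ).src,
      (φ ⟨(as.1 i, ρ i.succ), h⟩).1 = (ρ i.castSucc, bs.1 i)) :
    IterRel φ n (EPath.init' as) (ρ ((Fin.last n).castSucc)) (ρ 0) (EPath.init' bs) := by
  refine ⟨fun i => ρ i.castSucc, rfl, ?_, fun i => ?_⟩
  · show ρ (Fin.castSucc 0) = ρ 0
    rw [Fin.castSucc_zero]
  · obtain ⟨h, he⟩ := hstep i.castSucc
    exact ⟨h, he⟩
end Helpers

section CS
variable {V W : Type} {A : Matrix V V ℕ} {B : Matrix W W ℕ} {m : ℕ}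

/-- Swap the roles of `A` and `B` in a concrete shift. -/
def ConcreteShift.swap (cs : ConcreteShift A B m) : ConcreteShift B A m where
  hm := cs.hm
  R := cs.S
  S := cs.R
  φR := cs.φS
  φS := cs.φR
  ψA := cs.ψB
  ψB := cs.ψA
  φR_src := cs.φS_src
  φR_tgt := cs.φS_tgt
  φS_src := cs.φR_src
  φS_tgt := cs.φR_tgt
  ψA_src := cs.ψB_src
  ψA_tgt := cs.ψB_tgt
  ψB_src := cs.ψA_src
  ψB_tgt := cs.ψA_tgt

lemma exists_R_from (hA : MatEssential A) (cs : ConcreteShift A B m) (v : V) :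
    ∃ e : Edge cs.R, e.src = v := by
  obtain ⟨pa, hpa⟩ := exists_path_from hA v m cs.hm
  refine ⟨(cs.ψA.symm pa).1.1, ?_⟩
  have h := cs.ψA_src ⟨((cs.ψA.symm pa).1.1, (cs.ψA.symm pa).1.2), (cs.ψA.symm pa).2⟩
  have he : (⟨((cs.ψA.symm pa).1.1, (cs.ψA.symm pa).1.2), (cs.ψA.symm pa).2⟩ :
      FP (Edge cs.R) (Edge cs.S) Edge.tgt Edge.src) = cs.ψA.symm pa := rfl
  rw [he, cs.ψA.apply_symm_apply] at h
  rw [← h]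
  exact hpa
end CS
section Main
variable {V W : Type} {A : Matrix V V ℕ} {B : Matrix W W ℕ} {m : ℕ}

lemma aligned_half (hA : MatEssential A) (hB : MatEssential B) (cs : ConcreteShift A B m)
    (hc : cs.Compatible) :
    ∀ (a : Edge A) (r : Edge cs.R) (s : Edge cs.S)
      (h1 : a.tgt = r.src) (h2 : r.tgt = s.src)
      (r' : Edge cs.R) (b : Edge B) (_ : (cs.φR ⟨(a, r), h1⟩).1 = (r', b))
      (h3 : b.tgt = s.src)
      (s' : Edge cs.S) (a' : Edge A) (_ : (cs.φS ⟨(b, s), h3⟩).1 = (s', a'))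
      (h4 : r'.tgt = s'.src),
      (Fin.snoc (cs.ψA ⟨(r', s'), h4⟩).1 a' : Fin (m + 1) → Edge A) =
        (Fin.cons a (cs.ψA ⟨(r, s), h2⟩).1 : Fin (m + 1) → Edge A) := by
  intro a r s h1 h2 r' b hbr h3 s' a' hbs h4
  have hm := cs.hm
  have hi : m - 1 < m := Nat.sub_lt hm Nat.one_pos
  set p : EPath A m := cs.ψA ⟨(r, s), h2⟩ with hp
  have hpsrc : (p.1 ⟨0, hm⟩).src = r.src := cs.ψA_src ⟨(r, s), h2⟩
  have hptgt : (p.1 ⟨m-1, hi⟩).tgt = s.tgt := cs.ψA_tgt ⟨(r, s), h2⟩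
  -- ===== Part I : a' = p.1 ⟨m-1⟩ =====
  obtain ⟨as, has_last⟩ := exists_path_ending hA a m hm
  have hcomp1 : ∀ h : 0 < m, (as.1 ⟨m - 1, Nat.sub_lt h Nat.one_pos⟩).tgt = r.src := by
    intro h
    have e : (⟨m - 1, Nat.sub_lt h Nat.one_pos⟩ : Fin m) = ⟨m - 1, hi⟩ := rfl
    rw [e, has_last]; exact h1
  obtain ⟨ρ1, bs1, hρ1last, hstep1⟩ := exists_chain cs.φR cs.φR_src cs.φR_tgt m as r hcomp1
  have hIter1 : IterRel cs.φR m as r (ρ1 0) bs1 := ⟨ρ1, hρ1last, rfl, hstep1⟩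
  set w1 := cs.ψA.symm as with hw1
  have hw1e : cs.ψA ⟨(w1.1.1, w1.1.2), w1.2⟩ = as := cs.ψA.apply_symm_apply as
  have k2 : w1.1.2.tgt = r.src := by
    have h5 := cs.ψA_tgt ⟨(w1.1.1, w1.1.2), w1.2⟩
    rw [hw1e] at h5
    rw [← h5]
    show (as.1 ⟨m-1, hi⟩).tgt = r.src
    rw [has_last]; exact h1
  obtain ⟨hr0, hbs1⟩ := hc.1 as r (ρ1 0) bs1 hIter1 w1.1.1 w1.1.2 w1.2 hw1e k2
  -- identify b with bs1 at m-1
  obtain ⟨hx, hx2⟩ := hstep1 ⟨m-1, hi⟩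
  have hsucc : (⟨m-1, hi⟩ : Fin m).succ = Fin.last m := Fin.ext (by simp; omega)
  have hρtop : ρ1 (⟨m-1, hi⟩ : Fin m).succ = r := by rw [hsucc]; exact hρ1last
  have harg : (⟨(as.1 ⟨m-1, hi⟩, ρ1 (⟨m-1, hi⟩ : Fin m).succ), hx⟩ :
      FP (Edge A) (Edge cs.R) Edge.tgt Edge.src) = ⟨(a, r), h1⟩ :=
    Subtype.ext (show (as.1 ⟨m-1, hi⟩, ρ1 (⟨m-1, hi⟩ : Fin m).succ) = (a, r) by
      rw [has_last, hρtop])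
  have hb_eq : (ρ1 (⟨m-1, hi⟩ : Fin m).castSucc, bs1.1 ⟨m-1, hi⟩) = (r', b) := by
    rw [← hx2, harg, hbr]
  have hb : bs1.1 ⟨m-1, hi⟩ = b := congrArg Prod.snd hb_eq
  -- φS chain on bs1
  have hcomp2 : ∀ h : 0 < m, (bs1.1 ⟨m - 1, Nat.sub_lt h Nat.one_pos⟩).tgt = s.src := by
    intro h
    have h5 := cs.ψB_tgt ⟨(w1.1.2, r), k2⟩
    rw [← hbs1] at h5
    have h6 : (bs1.1 ⟨m - 1, Nat.sub_lt h Nat.one_pos⟩).tgt = r.tgt := h5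
    rw [h6]; exact h2
  obtain ⟨σ1, as2, hσ1last, hstep2⟩ := exists_chain cs.φS cs.φS_src cs.φS_tgt m bs1 s hcomp2
  have hIter2 : IterRel cs.φS m bs1 s (σ1 0) as2 := ⟨σ1, hσ1last, rfl, hstep2⟩
  obtain ⟨hσ0, has2⟩ := hc.2 bs1 s (σ1 0) as2 hIter2 w1.1.2 r k2 hbs1.symm h2
  obtain ⟨hy, hy2⟩ := hstep2 ⟨m-1, hi⟩
  have hσtop : σ1 (⟨m-1, hi⟩ : Fin m).succ = s := by rw [hsucc]; exact hσ1last
  have harg2 : (⟨(bs1.1 ⟨m-1, hi⟩, σ1 (⟨m-1, hi⟩ : Fin m).succ), hy⟩ :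
      FP (Edge B) (Edge cs.S) Edge.tgt Edge.src) = ⟨(b, s), h3⟩ :=
    Subtype.ext (show (bs1.1 ⟨m-1, hi⟩, σ1 (⟨m-1, hi⟩ : Fin m).succ) = (b, s) by
      rw [hb, hσtop])
  have ha_eq : (σ1 (⟨m-1, hi⟩ : Fin m).castSucc, as2.1 ⟨m-1, hi⟩) = (s', a') := by
    rw [← hy2, harg2, hbs]
  have KEY1 : a' = p.1 ⟨m-1, hi⟩ := by
    have h5 : as2.1 ⟨m-1, hi⟩ = a' := congrArg Prod.snd ha_eq
    rw [← h5, has2]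
  -- ===== Part II : ψA (r', s') = init (cons a p) =====
  obtain ⟨rp, hrp⟩ := exists_R_from hA cs s.tgt
  have hcons0 : ∀ hn : 0 < m, a.tgt = (p.1 ⟨0, hn⟩).src := by
    intro hn
    have e : (⟨0, hn⟩ : Fin m) = ⟨0, hm⟩ := rfl
    rw [e, hpsrc]; exact h1
  set qp : EPath A (m+1) := EPath.econs a p hcons0 with hqp
  have hqp_succ : ∀ i : Fin m, qp.1 i.succ = p.1 i := fun i => by
    show (Fin.cons a p.1 : Fin (m+1) → Edge A) i.succ = p.1 i
    rw [Fin.cons_succ]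
  have hqp_zero : qp.1 0 = a := by
    show (Fin.cons a p.1 : Fin (m+1) → Edge A) 0 = a
    rw [Fin.cons_zero]
  have hcomp3 : ∀ h : 0 < m + 1,
      (qp.1 ⟨m + 1 - 1, Nat.sub_lt h Nat.one_pos⟩).tgt = rp.src := by
    intro h
    have e : (⟨m + 1 - 1, Nat.sub_lt h Nat.one_pos⟩ : Fin (m+1)) = (⟨m-1, hi⟩ : Fin m).succ :=
      Fin.ext (by simp; omega)
    rw [e, hqp_succ, hptgt, hrp]
  obtain ⟨ρ, bp, hρlast, hstepρ⟩ :=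
    exists_chain cs.φR cs.φR_src cs.φR_tgt (m+1) qp rp hcomp3
  -- tail of the big φR chain
  have htail_q : EPath.tail' qp = p := Subtype.ext (funext hqp_succ)
  have hIterT : IterRel cs.φR m p rp (ρ ((0 : Fin (m+1)).succ)) (EPath.tail' bp) := by
    have h5 := iter_tail cs.φR qp rp ρ bp hρlast hstepρ
    rwa [htail_q] at h5
  have k3 : s.tgt = rp.src := hrp.symm
  obtain ⟨hρ1r, htailbp⟩ :=
    hc.1 p rp (ρ ((0 : Fin (m+1)).succ)) (EPath.tail' bp) hIterT r s h2 hp.symm k3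
  -- step 0 of ρ
  obtain ⟨hz, hz2⟩ := hstepρ 0
  have harg3 : (⟨(qp.1 0, ρ ((0 : Fin (m+1)).succ)), hz⟩ :
      FP (Edge A) (Edge cs.R) Edge.tgt Edge.src) = ⟨(a, r), h1⟩ :=
    Subtype.ext (show (qp.1 0, ρ ((0 : Fin (m+1)).succ)) = (a, r) by rw [hqp_zero, hρ1r])
  have hpair0 : (ρ ((0 : Fin (m+1)).castSucc), bp.1 0) = (r', b) := by
    rw [← hz2, harg3, hbr]
  have hρ0 : ρ 0 = r' := by
    have h5 : ρ ((0 : Fin (m+1)).castSucc) = r' := congrArg Prod.fst hpair0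
    rw [← h5]
    rw [Fin.castSucc_zero]
  have hbp0 : bp.1 0 = b := congrArg Prod.snd hpair0
  -- init of the big φR chain
  set qI : EPath A m := EPath.init' qp with hqI
  set w2 := cs.ψA.symm qI with hw2
  have hw2e : cs.ψA ⟨(w2.1.1, w2.1.2), w2.2⟩ = qI := cs.ψA.apply_symm_apply qI
  have hIterI : IterRel cs.φR m qI (ρ ((Fin.last m).castSucc)) (ρ 0) (EPath.init' bp) :=
    iter_init cs.φR qp ρ bp hstepρ
  -- the top step of the big chain, for src/tgt bookkeeping
  obtain ⟨hl, hl2⟩ := hstepρ (Fin.last m)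
  have hl_src : (ρ ((Fin.last m).castSucc)).src = (qp.1 (Fin.last m)).src := by
    have h5 := cs.φR_src ⟨(qp.1 (Fin.last m), ρ (Fin.last m).succ), hl⟩
    rw [hl2] at h5
    exact h5
  have hl_comp : (ρ ((Fin.last m).castSucc)).tgt = (bp.1 (Fin.last m)).src := by
    have h5 := (cs.φR ⟨(qp.1 (Fin.last m), ρ (Fin.last m).succ), hl⟩).2
    rw [hl2] at h5
    exact h5
  have ktop : w2.1.2.tgt = (ρ ((Fin.last m).castSucc)).src := by
    have h5 := cs.ψA_tgt ⟨(w2.1.1, w2.1.2), w2.2⟩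
    rw [hw2e] at h5
    rw [← h5]
    show (qI.1 ⟨m-1, hi⟩).tgt = (ρ ((Fin.last m).castSucc)).src
    rw [hl_src]
    show (qp.1 (⟨m-1, hi⟩ : Fin m).castSucc).tgt = (qp.1 (Fin.last m)).src
    have e6 : (Fin.last m : Fin (m+1)) = ⟨m - 1 + 1, by omega⟩ := Fin.ext (by simp; omega)
    have e7 : ((⟨m-1, hi⟩ : Fin m).castSucc : Fin (m+1)) = ⟨m - 1, by omega⟩ := rfl
    rw [e6, e7, qp.2 (m-1) (by omega)]
  obtain ⟨hρ0w, hinitbp⟩ := hc.1 qI (ρ ((Fin.last m).castSucc)) (ρ 0) (EPath.init' bp)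
    hIterI w2.1.1 w2.1.2 w2.2 hw2e ktop
  have hw2r : w2.1.1 = r' := by rw [← hρ0w, hρ0]
  -- ===== the φS chain on bp =====
  obtain ⟨sp, hsp⟩ := exists_R_from hB cs.swap rp.tgt
  have hcomp4 : ∀ h : 0 < m + 1,
      (bp.1 ⟨m + 1 - 1, Nat.sub_lt h Nat.one_pos⟩).tgt = sp.src := by
    intro h
    have h5 := cs.φR_tgt ⟨(qp.1 (Fin.last m), ρ (Fin.last m).succ), hl⟩
    rw [hl2] at h5
    have h6 : (bp.1 (Fin.last m)).tgt = (ρ (Fin.last m).succ).tgt := h5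
    have e : (⟨m + 1 - 1, Nat.sub_lt h Nat.one_pos⟩ : Fin (m+1)) = Fin.last m := rfl
    rw [e, h6]
    have e2 : (Fin.last m).succ = Fin.last (m+1) := Fin.succ_last m
    rw [e2, hρlast, hsp]
  obtain ⟨σ, ap, hσlast, hstepσ⟩ :=
    exists_chain cs.φS cs.φS_src cs.φS_tgt (m+1) bp sp hcomp4
  -- tail
  have hIterT2 : IterRel cs.φS m (EPath.tail' bp) sp (σ ((0 : Fin (m+1)).succ))
      (EPath.tail' ap) := iter_tail cs.φS bp sp σ ap hσlast hstepσ
  have k4 : rp.tgt = sp.src := hsp.symm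
  obtain ⟨hσ1s, _⟩ := hc.2 (EPath.tail' bp) sp (σ ((0 : Fin (m+1)).succ)) (EPath.tail' ap)
    hIterT2 s rp k3 htailbp.symm k4
  -- step 0 of σ
  obtain ⟨hu, hu2⟩ := hstepσ 0
  have harg4 : (⟨(bp.1 0, σ ((0 : Fin (m+1)).succ)), hu⟩ :
      FP (Edge B) (Edge cs.S) Edge.tgt Edge.src) = ⟨(b, s), h3⟩ :=
    Subtype.ext (show (bp.1 0, σ ((0 : Fin (m+1)).succ)) = (b, s) by rw [hbp0, hσ1s])
  have hpair0' : (σ ((0 : Fin (m+1)).castSucc), ap.1 0) = (s', a') := by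
    rw [← hu2, harg4, hbs]
  have hσ0 : σ 0 = s' := by
    have h5 : σ ((0 : Fin (m+1)).castSucc) = s' := congrArg Prod.fst hpair0'
    rw [← h5]
    rw [Fin.castSucc_zero]
  -- init of σ
  have hIterI2 : IterRel cs.φS m (EPath.init' bp) (σ ((Fin.last m).castSucc)) (σ 0)
      (EPath.init' ap) := iter_init cs.φS bp σ ap hstepσ
  obtain ⟨hl', hl2'⟩ := hstepσ (Fin.last m)
  have ktop2 : (ρ ((Fin.last m).castSucc)).tgt = (σ ((Fin.last m).castSucc)).src := by
    have h5 := cs.φS_src ⟨(bp.1 (Fin.last m), σ (Fin.last m).succ), hl'⟩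
    rw [hl2'] at h5
    rw [h5]
    exact hl_comp
  obtain ⟨hσ0w, _⟩ := hc.2 (EPath.init' bp) (σ ((Fin.last m).castSucc)) (σ 0)
    (EPath.init' ap) hIterI2 w2.1.2 (ρ ((Fin.last m).castSucc)) ktop hinitbp.symm ktop2
  have hw2s : w2.1.2 = s' := by rw [← hσ0w, hσ0]
  -- ===== conclusion =====
  have hfinal : cs.ψA ⟨(r', s'), h4⟩ = qI := by
    have e : (⟨(r', s'), h4⟩ : FP (Edge cs.R) (Edge cs.S) Edge.tgt Edge.src) =
        ⟨(w2.1.1, w2.1.2), w2.2⟩ :=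
      Subtype.ext (show (r', s') = (w2.1.1, w2.1.2) by rw [hw2r, hw2s])
    rw [e, hw2e]
  funext i
  refine Fin.lastCases ?_ ?_ i
  · rw [Fin.snoc_last, KEY1]
    have e : (Fin.last m : Fin (m+1)) = (⟨m-1, hi⟩ : Fin m).succ := Fin.ext (by simp; omega)
    rw [e, Fin.cons_succ]
  · intro j
    rw [Fin.snoc_castSucc, hfinal]
    rfl
end Main

/-- for essential matrices, a compatible concrete shift is aligned. -/
theorem stmt4 {V W : Type} {A : Matrix V V ℕ} {B : Matrix W W ℕ} {m : ℕ}
    (hA : MatEssential A) (hB : MatEssential B) (cs : ConcreteShift A B m)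
    (h : cs.Compatible) : cs.Aligned := by
  constructor
  · exact aligned_half hA hB cs h
  · exact aligned_half hB hA cs.swap ⟨h.2, h.1⟩
end

section
/- Let Z_1 be an A-B C*-correspondence and Z_2 a B-C C*-correspondence. Then for any closed ideal I ⊴ C, (Z_1 ⊗_B Z_2)^{-1}(I) = Z_1^{-1}(Z_2^{-1}(I)). -/
/-! Basic framework: C*-correspondences over (possibly non-unital) C*-algebras,
interior tensor products (characterized by their universal properties),
closed ideals, and unitary isomorphisms of correspondences. -/

noncomputable section

/-- A (non-degenerate) A–B C*-correspondence: a right Hilbert `B`-module `X`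
together with a left action of `A` by adjointable operators. -/
structure Corr (A B : Type) [NonUnitalCStarAlgebra A] [NonUnitalCStarAlgebra B] : Type 1 where
  X : Type
  [grp : NormedAddCommGroup X]
  [nsc : NormedSpace ℂ X]
  [cpl : CompleteSpace X]
  /-- the right action of `B` -/
  sm : X → B → X
  /-- the `B`-valued inner product (linear in the second variable) -/
  ip : X → X → B
  /-- the left action of `A` -/
  φ : A → X → X
  sm_add : ∀ x y b, sm (x + y) b = sm x b + sm y b
  sm_add' : ∀ x b c, sm x (b + c) = sm x b + sm x c
  sm_mul : ∀ x b c, sm (sm x b) c = sm x (b * c)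
  sm_smul : ∀ (t : ℂ) x b, sm (t • x) b = t • sm x b
  sm_smul' : ∀ (t : ℂ) x b, sm x (t • b) = t • sm x b
  ip_add : ∀ x y z, ip x (y + z) = ip x y + ip x z
  ip_smul : ∀ (t : ℂ) x y, ip x (t • y) = t • ip x y
  ip_sm : ∀ x y b, ip x (sm y b) = ip x y * b
  ip_star : ∀ x y, star (ip x y) = ip y x
  ip_pos : ∀ x, ∃ b, ip x x = star b * b
  ip_norm : ∀ x, ‖x‖ ^ 2 = ‖ip x x‖
  φ_add : ∀ a x y, φ a (x + y) = φ a x + φ a y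
  φ_add' : ∀ a b x, φ (a + b) x = φ a x + φ b x
  φ_smul : ∀ a (t : ℂ) x, φ a (t • x) = t • φ a x
  φ_smul' : ∀ (t : ℂ) a x, φ (t • a) x = t • φ a x
  φ_mul : ∀ a b x, φ (a * b) x = φ a (φ b x)
  φ_adj : ∀ a x y, ip (φ a x) y = ip x (φ (star a) y)
  /-- non-degeneracy of the left action -/
  nondeg : closure (Submodule.span ℂ {z | ∃ a x, z = φ a x} : Set X) = Set.univ

attribute [instance] Corr.grp Corr.nsc Corr.cpl

variable {A B C : Type} [NonUnitalCStarAlgebra A] [NonUnitalCStarAlgebra B]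
  [NonUnitalCStarAlgebra C]

/-- `Z.setR I` is the closed submodule `Z·I` of `Z`. -/
def Corr.setR (Z : Corr A B) (I : Set B) : Set Z.X :=
  closure (Submodule.span ℂ {x | ∃ ξ b, b ∈ I ∧ x = Z.sm ξ b} : Set Z.X)

/-- `Z.setL I` is the closed subspace `I·Z` of `Z`. -/
def Corr.setL (Z : Corr A B) (I : Set A) : Set Z.X :=
  closure (Submodule.span ℂ {x | ∃ a ξ, a ∈ I ∧ x = Z.φ a ξ} : Set Z.X)

/-- `Z⁻¹(I) = {a ∈ A : φ_Z(a)Z ⊆ ZI}`. -/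
def Corr.inv (Z : Corr A B) (I : Set B) : Set A := {a | ∀ ξ, Z.φ a ξ ∈ Z.setR I}

/-- The closed ideal of `B` generated by the inner products of `Z`. -/
def Corr.ipSet (Z : Corr A B) : Set B :=
  closure (Submodule.span ℂ {b | ∃ x y, b = Z.ip x y} : Set B)

/-- A generalized compact operator on the underlying Hilbert module of a correspondence:
one that is approximable in operator norm by finite sums of "rank one" operators
`θ_{ξ,η} : z ↦ ξ·⟨η,z⟩`. -/
def Corr.IsCompactOp (Z : Corr A B) (f : Z.X → Z.X) : Prop :=
  ∀ ε > (0 : ℝ), ∃ (n : ℕ) (ξ η : Fin n → Z.X),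
    ∀ z, ‖f z - ∑ i, Z.sm (ξ i) (Z.ip (η i) z)‖ ≤ ε * ‖z‖

/-- A closed (two-sided, automatically self-adjoint) ideal of a C*-algebra, as a set. -/
structure IsCIdeal {B : Type} [NonUnitalCStarAlgebra B] (I : Set B) : Prop where
  isClosed : IsClosed I
  zero_mem : (0 : B) ∈ I
  add_mem : ∀ x y, x ∈ I → y ∈ I → x + y ∈ I
  smul_mem : ∀ (t : ℂ) x, x ∈ I → t • x ∈ I
  mul_left_mem : ∀ b x, x ∈ I → b * x ∈ I
  mul_right_mem : ∀ b x, x ∈ I → x * b ∈ I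

/-- `t : Z₁ × Z₂ → T` exhibits `T` as the interior tensor product `Z₁ ⊗_B Z₂`. -/
structure IsTensor (Z₁ : Corr A B) (Z₂ : Corr B C) (T : Corr A C)
    (t : Z₁.X → Z₂.X → T.X) : Prop where
  add_left : ∀ x x' y, t (x + x') y = t x y + t x' y
  add_right : ∀ x y y', t x (y + y') = t x y + t x y'
  smul_left : ∀ (c : ℂ) x y, t (c • x) y = c • t x y
  balanced : ∀ x b y, t (Z₁.sm x b) y = t x (Z₂.φ b y)
  sm_right : ∀ x y c, t x (Z₂.sm y c) = T.sm (t x y) c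
  act_left : ∀ a x y, T.φ a (t x y) = t (Z₁.φ a x) y
  inner : ∀ x x' y y', T.ip (t x y) (t x' y') = Z₂.ip y (Z₂.φ (Z₁.ip x x') y')
  dense : closure (Submodule.span ℂ {z | ∃ x y, z = t x y} : Set T.X) = Set.univ

/-- `X ≅ Z₁ ⊗ Z₂` (unitary isomorphism with the interior tensor product). -/
def IsTensorProd (Z₁ : Corr A B) (Z₂ : Corr B C) (T : Corr A C) : Prop :=
  ∃ t, IsTensor Z₁ Z₂ T t

/-- A unitary isomorphism of A–B correspondences. -/
def CorrIso (Z W : Corr A B) : Prop :=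
  ∃ u : Z.X → W.X, Function.Surjective u ∧ (∀ x y, u (x + y) = u x + u y) ∧
    (∀ (c : ℂ) x, u (c • x) = c • u x) ∧ (∀ a x, u (Z.φ a x) = W.φ a (u x)) ∧
    (∀ x b, u (Z.sm x b) = W.sm (u x) b) ∧ (∀ x y, W.ip (u x) (u y) = Z.ip x y)

end
noncomputable section Aux

open Unitization

namespace Corr

variable {A B : Type} [NonUnitalCStarAlgebra A] [NonUnitalCStarAlgebra B] (Z : Corr A B)

lemma sm_zero (x : Z.X) : Z.sm x 0 = 0 := by
  have h := Z.sm_add' x 0 0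
  rw [add_zero] at h
  exact (add_eq_left.mp h.symm)

lemma zero_sm (b : B) : Z.sm 0 b = 0 := by
  have h := Z.sm_add 0 0 b
  rw [add_zero] at h
  exact (add_eq_left.mp h.symm)

lemma ip_zero_right (x : Z.X) : Z.ip x 0 = 0 := by
  have h := Z.ip_add x 0 0
  rw [add_zero] at h
  exact (add_eq_left.mp h.symm)

lemma ip_zero_left (x : Z.X) : Z.ip 0 x = 0 := by
  rw [← Z.ip_star, ip_zero_right, star_zero]

lemma φ_zero_right (a : A) : Z.φ a 0 = 0 := by
  have h := Z.φ_add a 0 0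
  rw [add_zero] at h
  exact (add_eq_left.mp h.symm)

lemma φ_zero_left (x : Z.X) : Z.φ 0 x = 0 := by
  have h := Z.φ_add' 0 0 x
  rw [add_zero] at h
  exact (add_eq_left.mp h.symm)

lemma ip_neg_right (x y : Z.X) : Z.ip x (-y) = -(Z.ip x y) := by
  rw [← neg_one_smul ℂ y, Z.ip_smul, neg_one_smul]

lemma ip_sub_right (x y z : Z.X) : Z.ip x (y - z) = Z.ip x y - Z.ip x z := by
  rw [sub_eq_add_neg, Z.ip_add, ip_neg_right, sub_eq_add_neg]

lemma ip_add_left (x y z : Z.X) : Z.ip (x + y) z = Z.ip x z + Z.ip y z := by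
  rw [← Z.ip_star, Z.ip_add, star_add, Z.ip_star, Z.ip_star]

lemma ip_smul_left (c : ℂ) (x y : Z.X) :
    Z.ip (c • x) y = (starRingEnd ℂ) c • Z.ip x y := by
  rw [← Z.ip_star, Z.ip_smul, star_smul, Z.ip_star]
  rfl

lemma ip_sub_left (x y z : Z.X) : Z.ip (x - y) z = Z.ip x z - Z.ip y z := by
  rw [← Z.ip_star, ip_sub_right, star_sub, Z.ip_star, Z.ip_star]

lemma φ_neg_right (a : A) (x : Z.X) : Z.φ a (-x) = -(Z.φ a x) := by
  rw [← neg_one_smul ℂ x, Z.φ_smul, neg_one_smul]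

lemma φ_sub_right (a : A) (x y : Z.X) : Z.φ a (x - y) = Z.φ a x - Z.φ a y := by
  rw [sub_eq_add_neg, Z.φ_add, φ_neg_right, sub_eq_add_neg]

lemma φ_neg_left (a : A) (x : Z.X) : Z.φ (-a) x = -(Z.φ a x) := by
  rw [← neg_one_smul ℂ a, Z.φ_smul', neg_one_smul]

lemma φ_sub_left (a a' : A) (x : Z.X) : Z.φ (a - a') x = Z.φ a x - Z.φ a' x := by
  rw [sub_eq_add_neg, Z.φ_add', φ_neg_left, sub_eq_add_neg]

lemma norm_eq_sqrt (x : Z.X) : ‖x‖ = Real.sqrt ‖Z.ip x x‖ := by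
  rw [← Z.ip_norm, Real.sqrt_sq (norm_nonneg x)]

lemma eq_zero_of_ip_self {x : Z.X} (h : Z.ip x x = 0) : x = 0 := by
  have := Z.ip_norm x
  rw [h, norm_zero] at this
  have : ‖x‖ = 0 := by nlinarith [norm_nonneg x]
  exact norm_eq_zero.mp this

lemma ip_self_star (x : Z.X) : star (Z.ip x x) = Z.ip x x := Z.ip_star x x

/-- If `⟨u, w⟩ = ⟨u, w'⟩` for all `u`, then `w = w'`. -/
lemma ext_ip {w w' : Z.X} (h : ∀ u, Z.ip u w = Z.ip u w') : w = w' := by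
  have h0 : ∀ u, Z.ip u (w - w') = 0 := fun u => by rw [ip_sub_right, h, sub_self]
  have := Z.eq_zero_of_ip_self (h0 (w - w'))
  exact sub_eq_zero.mp this

lemma ip_adj' (a : A) (x y : Z.X) : Z.ip x (Z.φ a y) = Z.ip (Z.φ (star a) x) y := by
  rw [← Z.ip_star, Z.φ_adj, Z.ip_star]

lemma inr_ip_nonneg (x : Z.X) : (0 : Unitization ℂ B) ≤ (Z.ip x x : Unitization ℂ B) := by
  obtain ⟨c, hc⟩ := Z.ip_pos x
  rw [hc, Unitization.inr_mul, Unitization.inr_star]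
  exact star_mul_self_nonneg _

lemma inr_ip_self_isSelfAdjoint (x : Z.X) :
    IsSelfAdjoint ((Z.ip x x : B) : Unitization ℂ B) := by
  rw [IsSelfAdjoint, ← Unitization.inr_star, Z.ip_star]

end Corr

end Aux
noncomputable section Aux2

open Unitization

/-- real smul as complex smul -/
lemma realsmul {M : Type*} [AddCommGroup M] [Module ℂ M] (r : ℝ) (v : M) :
    (r : ℂ) • v = (r • v : M) := by
  rw [← smul_one_smul ℂ r v, Complex.real_smul, mul_one]

namespace Corr

variable {A B : Type} [NonUnitalCStarAlgebra A] [NonUnitalCStarAlgebra B] (Z : Corr A B)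

/-- Cauchy–Schwarz for Hilbert C*-modules. -/
lemma norm_ip_sq_le (x y : Z.X) : ‖Z.ip x y‖ ^ 2 ≤ ‖Z.ip x x‖ * ‖Z.ip y y‖ := by
  by_cases hx : Z.ip x x = 0
  · have hx0 : x = 0 := Z.eq_zero_of_ip_self hx
    subst hx0
    simp [Z.ip_zero_left]
  set K : ℝ := ‖Z.ip x x‖ with hKdef
  have hK : 0 < K := norm_pos_iff.mpr hx
  set b : B := Z.ip x y with hbdef
  set c : ℂ := ((K⁻¹ : ℝ) : ℂ) with hcdef
  have hcc : star c = c := by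
    rw [hcdef, Complex.star_def, Complex.conj_ofReal]
  set β : B := c • b with hβdef
  set w : Z.X := Z.sm x β with hwdef
  have hyx : Z.ip y x = star b := by rw [hbdef]; exact (Z.ip_star x y).symm
  -- inner product computations
  have hxw : Z.ip x w = Z.ip x x * β := Z.ip_sm x x β
  have hwx : Z.ip w x = star β * Z.ip x x := by
    rw [← Z.ip_star, hxw, star_mul, Z.ip_star]
  have hww : Z.ip w w = star β * Z.ip x x * β := by
    rw [hwdef, Z.ip_sm, ← hwdef, hwx, mul_assoc, ← mul_assoc]
  have hyw : Z.ip y w = c • (star b * b) := by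
    rw [hwdef, Z.ip_sm, hyx, hβdef, mul_smul_comm]
  have hwy : Z.ip w y = c • (star b * b) := by
    have h := congrArg star hyw
    rw [Z.ip_star, star_smul, star_mul, star_star, hcc] at h
    exact h
  have hE : Z.ip (w - y) (w - y)
      = star β * Z.ip x x * β - c • (star b * b) - c • (star b * b) + Z.ip y y := by
    rw [Z.ip_sub_left, Z.ip_sub_right, Z.ip_sub_right, hww, hwy, hyw]
    abel
  have h1 := Z.inr_ip_nonneg (w - y)
  rw [hE] at h1
  simp only [Unitization.inr_add, Unitization.inr_sub, Unitization.inr_mul,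
    Unitization.inr_star, Unitization.inr_smul] at h1
  -- conjugation bound in the unitization
  have hsa : IsSelfAdjoint ((Z.ip x x : B) : Unitization ℂ B) := Z.inr_ip_self_isSelfAdjoint x
  have h2 : star ((β : B) : Unitization ℂ B) * ((Z.ip x x : B) : Unitization ℂ B) * (β : B)
      ≤ ‖((Z.ip x x : B) : Unitization ℂ B)‖ • (star ((β : B) : Unitization ℂ B) * (β : B)) :=
    CStarAlgebra.star_left_conjugate_le_norm_smul hsa
  rw [Unitization.norm_inr, ← hKdef, ← realsmul] at h2
  have hβb : ((β : B) : Unitization ℂ B) = c • ((b : B) : Unitization ℂ B) := by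
    rw [hβdef, Unitization.inr_smul]
  set P : Unitization ℂ B := star ((b : B) : Unitization ℂ B) * ((b : B) : Unitization ℂ B)
    with hPdef
  have hstar : star ((β : B) : Unitization ℂ B) * (β : B) = (c * c) • P := by
    rw [hβb, star_smul, smul_mul_smul_comm, hcc, hPdef]
  have h2' : star ((β : B) : Unitization ℂ B) * ((Z.ip x x : B) : Unitization ℂ B) * (β : B)
      ≤ c • P := by
    refine h2.trans_eq ?_
    rw [hstar, smul_smul, hcdef]
    congr 1
    push_cast
    field_simp
  -- from 0 ≤ W - M - M + Y and W ≤ M we get M ≤ Y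
  have hMY : c • P ≤ ((Z.ip y y : B) : Unitization ℂ B) := by
    have hmono := add_le_add_left (sub_le_sub_right (sub_le_sub_right h2' (c • P)) (c • P))
      ((Z.ip y y : B) : Unitization ℂ B)
    have h3 := h1.trans hmono
    have heq : c • P - c • P - c • P + ((Z.ip y y : B) : Unitization ℂ B)
        = ((Z.ip y y : B) : Unitization ℂ B) - c • P := by abel
    rw [heq] at h3
    exact sub_nonneg.mp h3
  have hMnn : (0 : Unitization ℂ B) ≤ c • P := by
    set s : ℂ := ((Real.sqrt K⁻¹ : ℝ) : ℂ) with hsdef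
    have : c • P = star (s • ((b : B) : Unitization ℂ B)) * (s • ((b : B) : Unitization ℂ B)) := by
      rw [star_smul, smul_mul_smul_comm, hPdef]
      congr 1
      rw [hsdef, Complex.star_def, Complex.conj_ofReal, ← Complex.ofReal_mul,
        Real.mul_self_sqrt (inv_nonneg.mpr hK.le), hcdef]
    rw [this]
    exact star_mul_self_nonneg _
  have h4 : ‖c • P‖ ≤ ‖((Z.ip y y : B) : Unitization ℂ B)‖ :=
    CStarAlgebra.norm_le_norm_of_nonneg_of_le hMnn hMY
  have hPn : ‖P‖ = ‖Z.ip x y‖ * ‖Z.ip x y‖ := by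
    rw [hPdef, CStarRing.norm_star_mul_self, Unitization.norm_inr, hbdef]
  have hcn : ‖c‖ = K⁻¹ := by
    rw [hcdef, Complex.norm_real, Real.norm_eq_abs, abs_of_nonneg (inv_nonneg.mpr hK.le)]
  rw [norm_smul, hcn, hPn, Unitization.norm_inr] at h4
  have h5 := mul_le_mul_of_nonneg_left h4 hK.le
  rw [← mul_assoc, mul_inv_cancel₀ hK.ne', one_mul] at h5
  rw [sq]
  exact h5

lemma norm_ip_le (x y : Z.X) : ‖Z.ip x y‖ ≤ ‖x‖ * ‖y‖ := by
  have h := Z.norm_ip_sq_le x y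
  rw [← Z.ip_norm, ← Z.ip_norm] at h
  have h2 : ‖Z.ip x y‖ ^ 2 ≤ (‖x‖ * ‖y‖) ^ 2 := by rw [mul_pow]; exact h
  have hab : (0:ℝ) ≤ ‖x‖ * ‖y‖ := by positivity
  calc ‖Z.ip x y‖ = Real.sqrt (‖Z.ip x y‖ ^ 2) := (Real.sqrt_sq (norm_nonneg _)).symm
    _ ≤ Real.sqrt ((‖x‖ * ‖y‖) ^ 2) := Real.sqrt_le_sqrt h2
    _ = ‖x‖ * ‖y‖ := Real.sqrt_sq hab

lemma continuous_ip_right (z' : Z.X) : Continuous (fun w => Z.ip z' w) := by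
  have hL : LipschitzWith ‖z'‖₊ (fun w => Z.ip z' w) := by
    refine LipschitzWith.of_dist_le_mul fun a b => ?_
    rw [dist_eq_norm, dist_eq_norm, ← Z.ip_sub_right, coe_nnnorm]
    exact Z.norm_ip_le _ _
  exact hL.continuous

lemma continuous_ip_left (v : Z.X) : Continuous (fun w => Z.ip w v) := by
  have : (fun w => Z.ip w v) = (fun b => star b) ∘ (fun w => Z.ip v w) := by
    funext w
    simp [Function.comp, Z.ip_star]
  rw [this]
  exact continuous_star.comp (Z.continuous_ip_right v)

end Corr

end Aux2
noncomputable section Aux3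

open Unitization

variable {D : Type} [NonUnitalCStarAlgebra D]

lemma isSelfAdjoint_of_inr_nonneg' {d : D} (hd : 0 ≤ ((d : D) : Unitization ℂ D)) :
    IsSelfAdjoint d := by
  have h := IsSelfAdjoint.of_nonneg hd
  rw [IsSelfAdjoint, ← Unitization.inr_star] at h
  exact Unitization.inr_injective (R := ℂ) h

lemma quasi_subset' {d : D} (hd : 0 ≤ ((d : D) : Unitization ℂ D)) :
    quasispectrum ℝ d ⊆ Set.Icc 0 ‖d‖ := by
  intro t ht
  rw [Unitization.quasispectrum_eq_spectrum_inr' ℝ ℂ d] at ht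
  refine ⟨spectrum_nonneg_of_nonneg hd ht, ?_⟩
  have h := spectrum.norm_le_norm_of_mem ht
  rw [Unitization.norm_inr] at h
  exact (le_abs_self t).trans ((Real.norm_eq_abs t) ▸ h)

namespace Corr

variable {A B : Type} [NonUnitalCStarAlgebra A] [NonUnitalCStarAlgebra B] (Z : Corr A B)

lemma ip_smul_real (t : ℝ) (x y : Z.X) : Z.ip x (t • y) = t • Z.ip x y := by
  rw [← realsmul, Z.ip_smul, realsmul]

lemma inr_ip_φ_le {d : A} (hd0 : 0 ≤ ((d : A) : Unitization ℂ A)) (y : Z.X) :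
    ((Z.ip y (Z.φ d y) : B) : Unitization ℂ B) ≤ ‖d‖ • ((Z.ip y y : B) : Unitization ℂ B) := by
  set r : ℝ := ‖d‖ with hrdef
  have hr : 0 ≤ r := norm_nonneg d
  have hsa : IsSelfAdjoint d := isSelfAdjoint_of_inr_nonneg' hd0
  have hσ := quasi_subset' hd0
  set g : ℝ → ℝ := fun t => Real.sqrt r - Real.sqrt (r - t) with hgdef
  have hgc : Continuous g := by
    exact continuous_const.sub (Real.continuous_sqrt.comp (continuous_const.sub continuous_id))
  have hg0 : g 0 = 0 := by simp [hgdef]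
  set e : A := cfcₙ g d with hedef
  have hesa : IsSelfAdjoint e := cfcₙ_predicate g d
  -- key identity e * e = (2√r) • e - d
  have key : e * e = (2 * Real.sqrt r) • e - d := by
    rw [hedef, ← cfcₙ_mul g g d hgc.continuousOn hg0 hgc.continuousOn hg0]
    have hcg : ContinuousOn (fun t => (2 * Real.sqrt r) • g t) (quasispectrum ℝ d) :=
      (hgc.const_smul (2 * Real.sqrt r)).continuousOn
    have hcg0 : (fun t => (2 * Real.sqrt r) • g t) 0 = 0 := by simp [hg0]
    have hid : ContinuousOn (fun t : ℝ => t) (quasispectrum ℝ d) := continuousOn_id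
    have hcongr : (quasispectrum ℝ d).EqOn (fun t => g t * g t)
        (fun t => (2 * Real.sqrt r) • g t - t) := by
      intro t ht
      obtain ⟨ht0, htr⟩ := hσ ht
      have h2 : Real.sqrt (r - t) * Real.sqrt (r - t) = r - t :=
        Real.mul_self_sqrt (by linarith)
      have h3 : Real.sqrt r * Real.sqrt r = r := Real.mul_self_sqrt hr
      simp only [hgdef, smul_eq_mul]
      ring_nf
      nlinarith [h2, h3]
    rw [cfcₙ_congr hcongr,
      cfcₙ_sub (fun t => (2 * Real.sqrt r) • g t) (fun t : ℝ => t) d hcg hcg0 hid rfl,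
      cfcₙ_smul (2 * Real.sqrt r) g d hgc.continuousOn hg0, cfcₙ_id' ℝ d]
  -- the element ψ
  set v : Z.X := Z.φ e y with hvdef
  set m : B := Z.ip y v with hmdef
  have hvy : Z.ip v y = m := by
    rw [hvdef, Z.φ_adj, hesa.star_eq, hmdef]
  have hsm2 : Z.φ ((2 * Real.sqrt r) • e) y = (2 * Real.sqrt r) • v := by
    rw [← realsmul, Z.φ_smul', realsmul, hvdef]
  have hvv : Z.ip v v = (2 * Real.sqrt r) • m - Z.ip y (Z.φ d y) := by
    have h1 : Z.ip v v = Z.ip y (Z.φ (e * e) y) := by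
      rw [hvdef, Z.φ_adj, hesa.star_eq, ← Z.φ_mul]
    rw [h1, key, Z.φ_sub_left, hsm2, Z.ip_sub_right, Z.ip_smul_real, ← hmdef]
  set c : ℂ := ((Real.sqrt r : ℝ) : ℂ) with hcdef
  have hcc : star c = c := by rw [hcdef, Complex.star_def, Complex.conj_ofReal]
  set ψ : Z.X := c • y - v with hψdef
  have hconj : (starRingEnd ℂ) c = c := hcc
  have hψψ : Z.ip ψ ψ = r • Z.ip y y - Z.ip y (Z.φ d y) := by
    have e1 : Z.ip ψ ψ
        = Z.ip (c • y) (c • y) - Z.ip (c • y) v - (Z.ip v (c • y) - Z.ip v v) := by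
      rw [hψdef, Z.ip_sub_left, Z.ip_sub_right, Z.ip_sub_right]
    have e2 : Z.ip (c • y) (c • y) = r • Z.ip y y := by
      rw [Z.ip_smul, Z.ip_smul_left, smul_smul, hconj]
      have hc2 : c * c = ((r : ℝ) : ℂ) := by
        rw [hcdef, ← Complex.ofReal_mul, Real.mul_self_sqrt hr]
      rw [hc2, realsmul]
    have e3 : Z.ip (c • y) v = c • m := by
      rw [Z.ip_smul_left, hconj, ← hmdef]
    have e4 : Z.ip v (c • y) = c • m := by
      rw [Z.ip_smul, hvy]
    have h2m : (2 * Real.sqrt r) • m = c • m + c • m := by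
      rw [← realsmul, ← add_smul]
      congr 1
      rw [hcdef]
      push_cast
      ring
    rw [e1, e2, e3, e4, hvv, h2m]
    abel
  have h1 := Z.inr_ip_nonneg ψ
  rw [hψψ] at h1
  rw [Unitization.inr_sub, ← realsmul, Unitization.inr_smul, realsmul] at h1
  exact sub_nonneg.mp h1

lemma norm_φ_le (b : A) (y : Z.X) : ‖Z.φ b y‖ ≤ ‖b‖ * ‖y‖ := by
  set d : A := star b * b with hddef
  have hd0 : 0 ≤ ((d : A) : Unitization ℂ A) := by
    rw [hddef, Unitization.inr_mul, Unitization.inr_star]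
    exact star_mul_self_nonneg _
  have hq : Z.ip (Z.φ b y) (Z.φ b y) = Z.ip y (Z.φ d y) := by
    rw [Z.φ_adj, ← Z.φ_mul, hddef]
  have h1 := Z.inr_ip_φ_le hd0 y
  rw [← hq] at h1
  have h0 := Z.inr_ip_nonneg (Z.φ b y)
  have h2 := CStarAlgebra.norm_le_norm_of_nonneg_of_le h0 h1
  rw [Unitization.norm_inr, norm_smul, Unitization.norm_inr, Real.norm_eq_abs,
    abs_of_nonneg (norm_nonneg d)] at h2
  have hdn : ‖d‖ = ‖b‖ * ‖b‖ := by rw [hddef, CStarRing.norm_star_mul_self]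
  have hyn : ‖Z.ip y y‖ = ‖y‖ ^ 2 := (Z.ip_norm y).symm
  rw [hdn, hyn] at h2
  rw [← Z.ip_norm (Z.φ b y)] at h2
  have hb := norm_nonneg b
  have hy := norm_nonneg y
  have hφ := norm_nonneg (Z.φ b y)
  calc ‖Z.φ b y‖ = Real.sqrt (‖Z.φ b y‖ ^ 2) := (Real.sqrt_sq hφ).symm
    _ ≤ Real.sqrt ((‖b‖ * ‖y‖) ^ 2) := Real.sqrt_le_sqrt (by nlinarith)
    _ = ‖b‖ * ‖y‖ := Real.sqrt_sq (by positivity)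

lemma continuous_φ_right (b : A) : Continuous (fun w => Z.φ b w) := by
  have hL : LipschitzWith ‖b‖₊ (fun w => Z.φ b w) := by
    refine LipschitzWith.of_dist_le_mul fun a' b' => ?_
    rw [dist_eq_norm, dist_eq_norm, ← Z.φ_sub_right, coe_nnnorm]
    exact Z.norm_φ_le _ _
  exact hL.continuous

lemma continuous_φ_left (ξ : Z.X) : Continuous (fun a => Z.φ a ξ) := by
  have hL : LipschitzWith ‖ξ‖₊ (fun a => Z.φ a ξ) := by
    refine LipschitzWith.of_dist_le_mul fun a' b' => ?_
    rw [dist_eq_norm, dist_eq_norm, ← Z.φ_sub_left, coe_nnnorm, mul_comm]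
    exact Z.norm_φ_le _ _
  exact hL.continuous

end Corr

end Aux3
noncomputable section Aux4

open Unitization

namespace Corr

variable {A B : Type} [NonUnitalCStarAlgebra A] [NonUnitalCStarAlgebra B] (Z : Corr A B)

lemma isClosed_setR (I : Set B) : IsClosed (Z.setR I) := isClosed_closure

lemma setR_eq (I : Set B) :
    Z.setR I = ((Submodule.span ℂ
      {x | ∃ ξ b, b ∈ I ∧ x = Z.sm ξ b}).topologicalClosure : Set Z.X) := by
  rw [Corr.setR, Submodule.topologicalClosure_coe]

lemma zero_mem_setR (I : Set B) : (0 : Z.X) ∈ Z.setR I := by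
  rw [setR_eq]
  exact Submodule.zero_mem _

lemma add_mem_setR {I : Set B} {x y : Z.X} (hx : x ∈ Z.setR I) (hy : y ∈ Z.setR I) :
    x + y ∈ Z.setR I := by
  rw [setR_eq] at *
  exact Submodule.add_mem _ hx hy

lemma smul_mem_setR {I : Set B} (c : ℂ) {x : Z.X} (hx : x ∈ Z.setR I) :
    c • x ∈ Z.setR I := by
  rw [setR_eq] at *
  exact Submodule.smul_mem _ c hx

/-- Easy direction: inner products against `Z·I` lie in `I`. -/
lemma ip_mem_of_mem_setR {I : Set B} (hI : IsCIdeal I) {z : Z.X} (hz : z ∈ Z.setR I)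
    (z' : Z.X) : Z.ip z' z ∈ I := by
  have hsub : (Submodule.span ℂ {x | ∃ ξ b, b ∈ I ∧ x = Z.sm ξ b} : Set Z.X) ⊆
      {w | Z.ip z' w ∈ I} := by
    intro w hw
    induction hw using Submodule.span_induction with
    | mem x hx =>
      obtain ⟨ξ, b, hb, rfl⟩ := hx
      show Z.ip z' (Z.sm ξ b) ∈ I
      rw [Z.ip_sm]
      exact hI.mul_left_mem _ _ hb
    | zero => show Z.ip z' 0 ∈ I; rw [Z.ip_zero_right]; exact hI.zero_mem
    | add x y _ _ hx hy => show Z.ip z' (x + y) ∈ I; rw [Z.ip_add]; exact hI.add_mem _ _ hx hy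
    | smul c x _ hx => show Z.ip z' (c • x) ∈ I; rw [Z.ip_smul]; exact hI.smul_mem _ _ hx
  have hclosed : IsClosed {w : Z.X | Z.ip z' w ∈ I} :=
    hI.isClosed.preimage (Z.continuous_ip_right z')
  exact closure_minimal hsub hclosed hz

/-- Hard direction: if `⟨z,z⟩ ∈ I` then `z ∈ Z·I`. -/
lemma mem_setR_of_ip_self {I : Set B} (hI : IsCIdeal I) {z : Z.X}
    (hz : Z.ip z z ∈ I) : z ∈ Z.setR I := by
  rw [Corr.setR, Metric.mem_closure_iff]
  intro δ hδ
  set b : B := Z.ip z z with hbdef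
  have hb0 : 0 ≤ ((b : B) : Unitization ℂ B) := Z.inr_ip_nonneg z
  have hbsa : IsSelfAdjoint b := isSelfAdjoint_of_inr_nonneg' hb0
  have hσ := quasi_subset' hb0
  set ε : ℝ := δ ^ 2 / 2 with hεdef
  have hε : 0 < ε := by positivity
  set g : ℝ → ℝ := fun t => t / (t + ε) with hgdef
  have hgc : ContinuousOn g (quasispectrum ℝ b) := by
    refine ContinuousOn.div continuousOn_id (by fun_prop) ?_
    intro t ht
    have := (hσ ht).1
    positivity
  have hg0 : g 0 = 0 := by simp [hgdef]
  have hid : ContinuousOn (fun t : ℝ => t) (quasispectrum ℝ b) := continuousOn_id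
  set d : B := cfcₙ g b with hddef
  have hdsa : IsSelfAdjoint d := cfcₙ_predicate g b
  -- d ∈ I
  have hbd : b * d = cfcₙ (fun t => t * g t) b := by
    rw [cfcₙ_mul (fun t : ℝ => t) g b hid rfl hgc hg0, cfcₙ_id' ℝ b]
  have hdb : d * b = cfcₙ (fun t => g t * t) b := by
    rw [cfcₙ_mul g (fun t : ℝ => t) b hgc hg0 hid rfl, cfcₙ_id' ℝ b]
  have hdbd : d * (b * d) = cfcₙ (fun t => g t * (t * g t)) b := by
    rw [cfcₙ_mul g (fun t => t * g t) b hgc hg0 (by exact hid.mul hgc) (by simp [hg0]), ← hbd]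
  have hd_eq : d = ((ε⁻¹ : ℝ) : ℂ) • (b - b * d) := by
    rw [hbd, realsmul]
    have hsub : b - cfcₙ (fun t => t * g t) b = cfcₙ (fun t => t - t * g t) b := by
      rw [cfcₙ_sub (fun t : ℝ => t) (fun t => t * g t) b hid rfl (hid.mul hgc) (by simp [hg0]),
        cfcₙ_id' ℝ b]
    rw [hsub, ← cfcₙ_smul ε⁻¹ (fun t => t - t * g t) b (by exact hid.sub (hid.mul hgc))
      (by simp [hg0])]
    refine (cfcₙ_congr ?_).symm
    intro t ht
    have ht0 := (hσ ht).1
    have htε : t + ε ≠ 0 := by positivity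
    simp only [hgdef, smul_eq_mul]
    field_simp
    ring
  have hdI : d ∈ I := by
    rw [hd_eq]
    refine hI.smul_mem _ _ ?_
    have h1 : b * d ∈ I := hI.mul_right_mem d b hz
    have h2 : b - b * d = b + (-1 : ℂ) • (b * d) := by
      rw [neg_one_smul]; abel
    rw [h2]
    exact hI.add_mem _ _ hz (hI.smul_mem _ _ h1)
  -- the approximation estimate
  set w : Z.X := z - Z.sm z d with hwdef
  have hzd : Z.ip z (Z.sm z d) = b * d := by rw [Z.ip_sm, hbdef]
  have hdz : Z.ip (Z.sm z d) z = d * b := by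
    rw [← Z.ip_star, hzd, star_mul, hdsa.star_eq, hbsa.star_eq]
  have hdd : Z.ip (Z.sm z d) (Z.sm z d) = d * b * d := by
    rw [Z.ip_sm, hdz]
  have hE : Z.ip w w = cfcₙ (fun t => (t - t * g t) - (g t * t - g t * (t * g t))) b := by
    have e1 : Z.ip w w = (b - b * d) - (d * b - d * (b * d)) := by
      rw [hwdef, Z.ip_sub_left, Z.ip_sub_right, Z.ip_sub_right, hzd, hdz, hdd, ← hbdef,
        mul_assoc]
    rw [e1, hdbd, hdb, hbd]
    rw [cfcₙ_sub (fun t => t - t * g t) (fun t => g t * t - g t * (t * g t)) b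
        (by exact hid.sub (hid.mul hgc)) (by simp [hg0])
        (by exact (hgc.mul hid).sub (hgc.mul (hid.mul hgc))) (by simp [hg0]),
      cfcₙ_sub (fun t : ℝ => t) (fun t => t * g t) b hid rfl (hid.mul hgc) (by simp [hg0]),
      cfcₙ_sub (fun t => g t * t) (fun t => g t * (t * g t)) b (hgc.mul hid) (by simp [hg0])
        (hgc.mul (hid.mul hgc)) (by simp [hg0]),
      cfcₙ_id' ℝ b]
  have hEbound : ‖Z.ip w w‖ ≤ ε := by
    rw [hE]
    refine norm_cfcₙ_le fun t ht => ?_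
    have ht0 := (hσ ht).1
    have htε : (0:ℝ) < t + ε := by positivity
    have hval : (t - t * g t) - (g t * t - g t * (t * g t)) = t * ε ^ 2 / (t + ε) ^ 2 := by
      simp only [hgdef]
      field_simp
      ring
    rw [hval, Real.norm_eq_abs, abs_of_nonneg (by positivity), div_le_iff₀ (by positivity)]
    nlinarith [sq_nonneg t, mul_nonneg ht0 hε.le]
  have hwnorm : ‖w‖ < δ := by
    have h1 : ‖w‖ ^ 2 ≤ ε := by rw [Z.ip_norm]; exact hEbound
    nlinarith [norm_nonneg w, hδ]
  refine ⟨Z.sm z d, ?_, ?_⟩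
  · exact Submodule.subset_span ⟨z, d, hdI, rfl⟩
  · rw [dist_eq_norm]
    exact hwnorm

end Corr

end Aux4
noncomputable section Aux5

namespace Corr

variable {A B : Type} [NonUnitalCStarAlgebra A] [NonUnitalCStarAlgebra B] (Z : Corr A B)

lemma sm_mem_setR {I : Set B} (ξ : Z.X) {c : B} (hc : c ∈ I) : Z.sm ξ c ∈ Z.setR I :=
  subset_closure (Submodule.subset_span ⟨ξ, c, hc, rfl⟩)

lemma φ_sm (a : A) (ξ : Z.X) (c : B) : Z.φ a (Z.sm ξ c) = Z.sm (Z.φ a ξ) c := by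
  apply Z.ext_ip
  intro u
  rw [Z.ip_adj', Z.ip_sm, Z.ip_sm, ← Z.ip_adj']

lemma φ_mapsTo_setR (a : A) {I : Set B} {w : Z.X} (hw : w ∈ Z.setR I) :
    Z.φ a w ∈ Z.setR I := by
  have hsub : (Submodule.span ℂ {x | ∃ ξ b, b ∈ I ∧ x = Z.sm ξ b} : Set Z.X) ⊆
      {w | Z.φ a w ∈ Z.setR I} := by
    intro x hx
    induction hx using Submodule.span_induction with
    | mem x hx =>
      obtain ⟨ξ, c, hc, rfl⟩ := hx
      show Z.φ a (Z.sm ξ c) ∈ Z.setR I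
      rw [Z.φ_sm]
      exact Z.sm_mem_setR _ hc
    | zero => show Z.φ a 0 ∈ Z.setR I; rw [Z.φ_zero_right]; exact Z.zero_mem_setR I
    | add x y _ _ hx hy =>
      show Z.φ a (x + y) ∈ Z.setR I
      rw [Z.φ_add]
      exact Z.add_mem_setR hx hy
    | smul c x _ hx =>
      show Z.φ a (c • x) ∈ Z.setR I
      rw [Z.φ_smul]
      exact Z.smul_mem_setR c hx
  have hclosed : IsClosed {w : Z.X | Z.φ a w ∈ Z.setR I} :=
    (Z.isClosed_setR I).preimage (Z.continuous_φ_right a)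
  exact closure_minimal hsub hclosed hw

lemma inv_isCIdeal {I : Set B} (hI : IsCIdeal I) : IsCIdeal (Z.inv I) := by
  refine ⟨?_, ?_, ?_, ?_, ?_, ?_⟩
  · have heq : Z.inv I = ⋂ ξ : Z.X, (fun a => Z.φ a ξ) ⁻¹' (Z.setR I) := by
      ext a
      simp only [Corr.inv, Set.mem_setOf_eq, Set.mem_iInter, Set.mem_preimage]
    rw [heq]
    exact isClosed_iInter fun ξ => (Z.isClosed_setR I).preimage (Z.continuous_φ_left ξ)
  · intro ξ
    rw [Z.φ_zero_left]
    exact Z.zero_mem_setR I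
  · intro x y hx hy ξ
    rw [Z.φ_add']
    exact Z.add_mem_setR (hx ξ) (hy ξ)
  · intro c x hx ξ
    rw [Z.φ_smul']
    exact Z.smul_mem_setR c (hx ξ)
  · intro b x hx ξ
    rw [Z.φ_mul]
    exact Z.φ_mapsTo_setR b (hx ξ)
  · intro b x hx ξ
    rw [Z.φ_mul]
    exact hx (Z.φ b ξ)

end Corr

section TensorAux

variable {A B C : Type} [NonUnitalCStarAlgebra A] [NonUnitalCStarAlgebra B]
  [NonUnitalCStarAlgebra C] {Z₁ : Corr A B} {Z₂ : Corr B C} {T : Corr A C}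
  {t : Z₁.X → Z₂.X → T.X}

lemma dense_induction_tensor (ht : IsTensor Z₁ Z₂ T t) {P : Set T.X} (hP : IsClosed P)
    (h0 : (0 : T.X) ∈ P) (hadd : ∀ x y, x ∈ P → y ∈ P → x + y ∈ P)
    (hsmul : ∀ (c : ℂ) x, x ∈ P → c • x ∈ P) (hgen : ∀ x y, t x y ∈ P) :
    ∀ ζ, ζ ∈ P := by
  intro ζ
  have hζ : ζ ∈ closure (Submodule.span ℂ {z | ∃ x y, z = t x y} : Set T.X) := by
    rw [ht.dense]
    trivial
  refine closure_minimal ?_ hP hζ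
  intro w hw
  induction hw using Submodule.span_induction with
  | mem x hx => obtain ⟨x', y', rfl⟩ := hx; exact hgen _ _
  | zero => exact h0
  | add x y _ _ hx hy => exact hadd _ _ hx hy
  | smul c x _ hx => exact hsmul c _ hx

end TensorAux

end Aux5
/-- `(Z₁ ⊗_B Z₂)⁻¹(I) = Z₁⁻¹(Z₂⁻¹(I))` for a closed ideal `I ⊴ C`. -/
theorem stmt6 {A B C : Type} [NonUnitalCStarAlgebra A] [NonUnitalCStarAlgebra B]
    [NonUnitalCStarAlgebra C] (Z₁ : Corr A B) (Z₂ : Corr B C) (T : Corr A C)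
    (t : Z₁.X → Z₂.X → T.X) (ht : IsTensor Z₁ Z₂ T t)
    (I : Set C) (hI : IsCIdeal I) :
    T.inv I = Z₁.inv (Z₂.inv I) := by
  have hJ : IsCIdeal (Z₂.inv I) := Z₂.inv_isCIdeal hI
  ext a
  constructor
  · -- (Z₁ ⊗ Z₂)⁻¹(I) ⊆ Z₁⁻¹(Z₂⁻¹(I))
    intro ha ξ
    refine Z₁.mem_setR_of_ip_self hJ ?_
    intro y
    set u : Z₁.X := Z₁.φ a ξ with hudef
    set c : B := Z₁.ip u u with hcdef
    have hc : star c = c := Z₁.ip_star u u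
    refine Z₂.mem_setR_of_ip_self hI ?_
    set w : Z₂.X := Z₂.φ c y with hwdef
    have h1 : Z₂.ip w w = Z₂.ip y (Z₂.φ c w) := by
      rw [hwdef, Z₂.φ_adj, hc]
    have h2 : Z₂.ip y (Z₂.φ c w) = T.ip (t u y) (t u w) := (ht.inner u u y w).symm
    have h3 : t u w = T.φ a (t ξ w) := (ht.act_left a ξ w).symm
    rw [h1, h2, h3]
    exact T.ip_mem_of_mem_setR hI (ha (t ξ w)) (t u y)
  · -- Z₁⁻¹(Z₂⁻¹(I)) ⊆ (Z₁ ⊗ Z₂)⁻¹(I)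
    intro ha
    have claim1 : ∀ (x : Z₁.X) (y : Z₂.X) (η : T.X), T.ip η (t (Z₁.φ a x) y) ∈ I := by
      intro x y
      have hu : Z₁.φ a x ∈ Z₁.setR (Z₂.inv I) := ha x
      refine dense_induction_tensor ht (P := {η | T.ip η (t (Z₁.φ a x) y) ∈ I}) ?_ ?_ ?_ ?_ ?_
      · exact hI.isClosed.preimage (T.continuous_ip_left (t (Z₁.φ a x) y))
      · show T.ip 0 _ ∈ I
        rw [T.ip_zero_left]
        exact hI.zero_mem
      · intro p q hp hq
        show T.ip (p + q) _ ∈ I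
        rw [T.ip_add_left]
        exact hI.add_mem _ _ hp hq
      · intro cc p hp
        show T.ip (cc • p) _ ∈ I
        rw [T.ip_smul_left]
        exact hI.smul_mem _ _ hp
      · intro x' y'
        show T.ip (t x' y') (t (Z₁.φ a x) y) ∈ I
        rw [ht.inner]
        have hb' : Z₁.ip x' (Z₁.φ a x) ∈ Z₂.inv I := Z₁.ip_mem_of_mem_setR hJ hu x'
        exact Z₂.ip_mem_of_mem_setR hI (hb' y) y'
    have claim2 : ∀ (η ζ : T.X), T.ip η (T.φ a ζ) ∈ I := by
      intro η
      have hall : ∀ ζ, ζ ∈ {ζ : T.X | T.ip (T.φ (star a) η) ζ ∈ I} := by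
        refine dense_induction_tensor ht ?_ ?_ ?_ ?_ ?_
        · exact hI.isClosed.preimage (T.continuous_ip_right (T.φ (star a) η))
        · show T.ip _ (0 : T.X) ∈ I
          rw [T.ip_zero_right]
          exact hI.zero_mem
        · intro p q hp hq
          show T.ip _ (p + q) ∈ I
          rw [T.ip_add]
          exact hI.add_mem _ _ hp hq
        · intro cc p hp
          show T.ip _ (cc • p) ∈ I
          rw [T.ip_smul]
          exact hI.smul_mem _ _ hp
        · intro x y
          show T.ip (T.φ (star a) η) (t x y) ∈ I
          rw [← T.ip_adj', ht.act_left]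
          exact claim1 x y η
      intro ζ
      rw [T.ip_adj']
      exact hall ζ
    intro ζ
    exact T.mem_setR_of_ip_self hI (claim2 (T.φ a ζ) ζ)
end
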